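/- Let X be a compact topological space, f : X → X a homeomorphism, and M⁺, M⁻ ⊆ X closed sets with M⁺ ∪ M⁻ = X, f(M⁺) contained in the interior of M⁺, and f⁻¹(M⁻) contained in the interior of M⁻. Set A := ⋂_{n ≥ 0} fⁿ(M⁺) and R := ⋂_{n ≥ 0} f⁻ⁿ(M⁻). Then for every open set U_A containing A and every open set U_R containing R, there exists n₀ ∈ ℕ such that f^{n₀}(X \ U_R) ⊆ U_A. -/

import Mathlib

open Set

private lemma aux_exists_subset
    {X : Type*} [TopologicalSpace X] [CompactSpace X]
    (g : X → X) (hg : IsClosedMap g) (M : Set X) (hM : IsClosed M)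
    (hmono : g '' M ⊆ M) (U : Set X) (hU : IsOpen U)
    (hsub : ⋂ n : ℕ, g^[n] '' M ⊆ U) : ∃ N : ℕ, g^[N] '' M ⊆ U := by
  have hclosed : ∀ n, IsClosed (g^[n] '' M) := by
    intro n
    induction n with
    | zero => simpa using hM
    | succ n ih =>
      rw [Function.iterate_succ', image_comp]
      exact hg _ ih
  have hanti : Antitone fun n => g^[n] '' M := by
    apply antitone_nat_of_succ_le
    intro n
    rw [Function.iterate_succ, image_comp]
    exact image_mono hmono
  have hK : IsCompact (Uᶜ) := hU.isClosed_compl.isCompact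
  have hempty : Uᶜ ∩ ⋂ n, g^[n] '' M = ∅ := by
    rw [eq_empty_iff_forall_notMem]
    rintro x ⟨hx, hx'⟩
    exact hx (hsub hx')
  obtain ⟨N, hN⟩ := hK.elim_directed_family_closed _ hclosed hempty
    (hanti.directed_ge)
  refine ⟨N, fun x hx => ?_⟩
  by_contra hxU
  exact absurd hN (by rw [eq_empty_iff_forall_notMem] at hN ⊢; intro h; exact h x ⟨hxU, hx⟩)

/-- Claim at the start of the proof of Lemma 9.1: given neighborhoods `U_A` of the
attractor `A` and `U_R` of the repeller `R`, some iterate `f^{n₀}` maps the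
complement of `U_R` into `U_A`. -/
theorem iterate_image_compl_subset
    {X : Type*} [TopologicalSpace X] [CompactSpace X]
    (f : X ≃ₜ X) (Mp Mm : Set X)
    (hMp : IsClosed Mp) (hMm : IsClosed Mm)
    (hcover : Mp ∪ Mm = univ)
    (hattr : f '' Mp ⊆ interior Mp)
    (hrep : f.symm '' Mm ⊆ interior Mm)
    (UA UR : Set X) (hUA : IsOpen UA) (hUR : IsOpen UR)
    (hA : ⋂ n : ℕ, (⇑f)^[n] '' Mp ⊆ UA)
    (hR : ⋂ n : ℕ, (⇑f.symm)^[n] '' Mm ⊆ UR) :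
    ∃ n₀ : ℕ, (⇑f)^[n₀] '' (univ \ UR) ⊆ UA := by
  obtain ⟨N, hN⟩ := aux_exists_subset (⇑f.symm) f.symm.isClosedMap Mm hMm
    (hrep.trans interior_subset) UR hUR hR
  obtain ⟨M, hM⟩ := aux_exists_subset (⇑f) f.isClosedMap Mp hMp
    (hattr.trans interior_subset) UA hUA hA
  refine ⟨M + N, ?_⟩
  rintro _ ⟨x, ⟨-, hxUR⟩, rfl⟩
  rw [Function.iterate_add_apply]
  have hfNx : (⇑f)^[N] x ∈ Mp := by
    have hnotMm : (⇑f)^[N] x ∉ Mm := by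
      intro hm
      apply hxUR
      apply hN
      refine ⟨(⇑f)^[N] x, hm, ?_⟩
      have hli : Function.LeftInverse (⇑f.symm) (⇑f) := f.symm_apply_apply
      exact hli.iterate N x
    have := hcover ▸ mem_univ ((⇑f)^[N] x)
    rcases (hcover.symm ▸ mem_univ ((⇑f)^[N] x) : (⇑f)^[N] x ∈ Mp ∪ Mm) with h | h
    · exact h
    · exact absurd h hnotMm
  exact hM ⟨(⇑f)^[N] x, hfNx, rfl⟩
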